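/- arXiv:1612.07641 — 2 statements merged into one kernel-verified Lean document; each statement's English description precedes it below -/
import Mathlib

section
/- For every n ≥ 1, every permutation τ ∈ S_{2n}, and every partition λ of n, the number of pair partitions σ ∈ M_{2n} (viewed as permutations) such that the coset-type ρ(τ^{-1}σ) equals λ is C(λ); that is, left translation of the transversal M_{2n} by τ^{-1} does not change the distribution of coset-types. -/
open Equiv Finset

def pairInv (n : ℕ) : Fin (2*n) → Fin (2*n) :=
  fun x => ⟨2 * (x.val / 2) + (1 - x.val % 2), by omega⟩

lemma pairInv_involutive (n : ℕ) : Function.Involutive (pairInv n) := by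
  intro x
  apply Fin.ext
  simp only [pairInv]
  omega

/-- The graph Γ(σ): red edges {2k,2k+1} (0-indexed) and blue edges {σ(2k),σ(2k+1)}. -/
def gammaGraph {n : ℕ} (σ : Perm (Fin (2*n))) : SimpleGraph (Fin (2*n)) where
  Adj x y := x ≠ y ∧ (pairInv n x = y ∨ pairInv n (σ⁻¹ x) = σ⁻¹ y)
  symm := by
    refine ⟨?_⟩
    rintro x y ⟨hxy, h | h⟩
    · exact ⟨hxy.symm, Or.inl (by rw [← h, pairInv_involutive])⟩
    · exact ⟨hxy.symm, Or.inr (by rw [← h, pairInv_involutive])⟩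
  loopless := by constructor; rintro x ⟨hx, -⟩; exact hx rfl

instance {n : ℕ} (σ : Perm (Fin (2*n))) : DecidableRel (gammaGraph σ).Adj :=
  fun x y => inferInstanceAs (Decidable (x ≠ y ∧ (pairInv n x = y ∨ pairInv n (σ⁻¹ x) = σ⁻¹ y)))

/-- The coset-type of σ ∈ S_{2n}: the multiset of half-sizes of the connected
components of Γ(σ). -/
noncomputable def cosetType {n : ℕ} (σ : Perm (Fin (2*n))) : Multiset ℕ := by
  classical
  exact (Finset.univ : Finset (gammaGraph σ).ConnectedComponent).val.map
    (fun c => (Finset.univ.filter fun v => (gammaGraph σ).connectedComponentMk v = c).card / 2)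

/-- σ ∈ M_{2n}: the permutation (in one-line notation a₁ b₁ a₂ b₂ ⋯) of a pair partition,
i.e. σ(2k) < σ(2k+1) and σ(0) < σ(2) < ⋯ (0-indexed). -/
def isPairPerm {n : ℕ} (σ : Perm (Fin (2*n))) : Prop :=
  (∀ (k : ℕ) (h : k < n), σ ⟨2*k, by omega⟩ < σ ⟨2*k+1, by omega⟩) ∧
  (∀ (k : ℕ) (h : k+1 < n), σ ⟨2*k, by omega⟩ < σ ⟨2*k+2, by omega⟩)

/-- δ_I(σ) = 1 : the pair partition σ pairs only positions carrying equal values of I. -/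
def pairsEq {n : ℕ} {α : Type*} (I : Fin (2*n) → α) (σ : Perm (Fin (2*n))) : Prop :=
  ∀ (k : ℕ) (h : k < n), I (σ ⟨2*k, by omega⟩) = I (σ ⟨2*k+1, by omega⟩)

/-- C(λ): the number of pair partitions in M_{2n} with coset-type λ. -/
noncomputable def CC (n : ℕ) (lam : Multiset ℕ) : ℕ :=
  Nat.card {σ : Perm (Fin (2*n)) // isPairPerm σ ∧ cosetType σ = lam}


namespace Stmt2Aux

open Equiv Finset

variable {n : ℕ}

lemma vmk {N a : ℕ} (h : a < N) : ((⟨a, h⟩ : Fin N)).val = a := rfl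

lemma pairInv_val (x : Fin (2*n)) :
    (pairInv n x).val = 2*(x.val/2) + (1 - x.val % 2) := rfl

lemma pairInv_even (m : ℕ) (hm : 2*m+1 < 2*n) :
    pairInv n ⟨2*m, by omega⟩ = ⟨2*m+1, hm⟩ := by
  apply Fin.ext
  show 2*((2*m)/2) + (1 - (2*m) % 2) = 2*m+1
  omega

lemma pairInv_odd (m : ℕ) (hm : 2*m+1 < 2*n) :
    pairInv n ⟨2*m+1, hm⟩ = ⟨2*m, by omega⟩ := by
  apply Fin.ext
  show 2*((2*m+1)/2) + (1 - (2*m+1) % 2) = 2*m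
  omega

/-- The partner involution on positions induced by `g`. -/
def partner (g : Perm (Fin (2*n))) (x : Fin (2*n)) : Fin (2*n) := g (pairInv n (g⁻¹ x))

lemma partner_involutive (g : Perm (Fin (2*n))) : Function.Involutive (partner g) := by
  intro x
  simp [partner, pairInv_involutive n (g⁻¹ x), pairInv_involutive n (Equiv.symm g x)]

lemma partner_ne (g : Perm (Fin (2*n))) (x : Fin (2*n)) : partner g x ≠ x := by
  intro h
  have h2 : pairInv n (g⁻¹ x) = g⁻¹ x := by
    apply g.injective
    rw [show g (g⁻¹ x) = x from g.apply_symm_apply x]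
    simpa [partner] using h
  have h3 := congrArg Fin.val h2
  rw [pairInv_val] at h3
  omega

lemma partner_apply (g : Perm (Fin (2*n))) (y : Fin (2*n)) :
    partner g (g y) = g (pairInv n y) := by simp [partner]

def pset (p : Fin (2*n) → Fin (2*n)) : Finset (Fin (2*n)) :=
  Finset.univ.filter fun x => x < p x

lemma mem_pset {p : Fin (2*n) → Fin (2*n)} {x : Fin (2*n)} : x ∈ pset p ↔ x < p x := by
  simp [pset]

lemma not_mem_pset {p : Fin (2*n) → Fin (2*n)} (hp : Function.Involutive p)
    {x : Fin (2*n)} (hx : x ∈ pset p) : p x ∉ pset p := by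
  rw [mem_pset] at hx ⊢
  rw [hp x]
  exact not_lt.mpr hx.le

lemma pset_card {p : Fin (2*n) → Fin (2*n)} (hp : Function.Involutive p)
    (hf : ∀ x, p x ≠ x) : (pset p).card = n := by
  have hbij : (Finset.univ.filter fun x : Fin (2*n) => x < p x).card
      = (Finset.univ.filter fun x : Fin (2*n) => ¬ x < p x).card := by
    apply Finset.card_bij (fun a _ => p a)
    · intro a ha
      simp only [Finset.mem_filter, Finset.mem_univ, true_and] at ha
      simp only [Finset.mem_filter, Finset.mem_univ, true_and, hp a]
      exact not_lt.mpr ha.le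
    · intro a _ b _ h
      exact hp.injective h
    · intro b hb
      simp only [Finset.mem_filter, Finset.mem_univ, true_and, not_lt] at hb
      refine ⟨p b, ?_, hp b⟩
      simp only [Finset.mem_filter, Finset.mem_univ, true_and, hp b]
      exact lt_of_le_of_ne hb (hf b)
  have htot := Finset.card_filter_add_card_filter_not
    (s := (Finset.univ : Finset (Fin (2*n)))) (fun x : Fin (2*n) => x < p x)
  simp only [Finset.card_univ, Fintype.card_fin] at htot
  show (Finset.univ.filter fun x : Fin (2*n) => x < p x).card = n
  omega

/-- The raw pair-perm function built from an involution `p`. -/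
noncomputable def rawFun (p : Fin (2*n) → Fin (2*n)) (h : (pset p).card = n) :
    Fin (2*n) → Fin (2*n) :=
  fun x => if x.val % 2 = 0
    then (pset p).orderEmbOfFin h ⟨x.val/2, by have := x.isLt; omega⟩
    else p ((pset p).orderEmbOfFin h ⟨x.val/2, by have := x.isLt; omega⟩)

lemma rawFun_injective {p : Fin (2*n) → Fin (2*n)} (hp : Function.Involutive p)
    (h : (pset p).card = n) : Function.Injective (rawFun p h) := by
  set e := (pset p).orderEmbOfFin h with he
  have hmem : ∀ i, e i ∈ pset p := fun i => (pset p).orderEmbOfFin_mem h i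
  intro x y hxy
  unfold rawFun at hxy
  by_cases hx : x.val % 2 = 0 <;> by_cases hy : y.val % 2 = 0 <;>
    simp only [hx, hy, if_true, if_false, ite_true, ite_false, ← he] at hxy
  · have h1 := e.injective hxy
    have h2 := congrArg Fin.val h1
    simp only [vmk] at h2
    exact Fin.ext (by omega)
  · exact absurd (hxy ▸ hmem _) (not_mem_pset hp (hmem _))
  · exact absurd (hxy.symm ▸ hmem _) (not_mem_pset hp (hmem _))
  · have h1 := e.injective (hp.injective hxy)
    have h2 := congrArg Fin.val h1
    simp only [vmk] at h2
    exact Fin.ext (by omega)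

noncomputable def rawPerm (p : Fin (2*n) → Fin (2*n)) (hp : Function.Involutive p)
    (h : (pset p).card = n) : Perm (Fin (2*n)) :=
  Equiv.ofBijective (rawFun p h) (Finite.injective_iff_bijective.mp (rawFun_injective hp h))

lemma rawPerm_apply (p : Fin (2*n) → Fin (2*n)) (hp : Function.Involutive p)
    (h : (pset p).card = n) (x : Fin (2*n)) :
    rawPerm p hp h x = if x.val % 2 = 0
      then (pset p).orderEmbOfFin h ⟨x.val/2, by have := x.isLt; omega⟩
      else p ((pset p).orderEmbOfFin h ⟨x.val/2, by have := x.isLt; omega⟩) := rfl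

lemma rawPerm_even (p : Fin (2*n) → Fin (2*n)) (hp : Function.Involutive p)
    (h : (pset p).card = n) (k : ℕ) (hk : k < n) :
    rawPerm p hp h ⟨2*k, by omega⟩ = (pset p).orderEmbOfFin h ⟨k, hk⟩ := by
  rw [rawPerm_apply, if_pos (show ((⟨2*k, by omega⟩ : Fin (2*n))).val % 2 = 0 by
    rw [vmk]; omega)]
  congr 1
  apply Fin.ext
  show (2*k)/2 = k
  omega

lemma rawPerm_odd (p : Fin (2*n) → Fin (2*n)) (hp : Function.Involutive p)
    (h : (pset p).card = n) (k : ℕ) (hk : k < n) :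
    rawPerm p hp h ⟨2*k+1, by omega⟩ = p ((pset p).orderEmbOfFin h ⟨k, hk⟩) := by
  rw [rawPerm_apply, if_neg (show ¬ ((⟨2*k+1, by omega⟩ : Fin (2*n))).val % 2 = 0 by
    rw [vmk]; omega)]
  congr 2
  apply Fin.ext
  show (2*k+1)/2 = k
  omega

lemma isPairPerm_rawPerm {p : Fin (2*n) → Fin (2*n)} (hp : Function.Involutive p)
    (h : (pset p).card = n) : isPairPerm (rawPerm p hp h) := by
  constructor
  · intro k hk
    rw [rawPerm_even p hp h k hk, rawPerm_odd p hp h k hk]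
    exact mem_pset.mp ((pset p).orderEmbOfFin_mem h ⟨k, hk⟩)
  · intro k hk
    have heq : (⟨2*k+2, by omega⟩ : Fin (2*n)) = ⟨2*(k+1), by omega⟩ := by
      apply Fin.ext; show 2*k+2 = 2*(k+1); omega
    rw [heq, rawPerm_even p hp h k (by omega), rawPerm_even p hp h (k+1) hk]
    apply ((pset p).orderEmbOfFin h).strictMono
    show (⟨k, _⟩ : Fin n) < ⟨k+1, _⟩
    simp only [Fin.mk_lt_mk]
    omega

lemma rawPerm_pairInv {p : Fin (2*n) → Fin (2*n)} (hp : Function.Involutive p)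
    (h : (pset p).card = n) (x : Fin (2*n)) :
    rawPerm p hp h (pairInv n x) = p (rawPerm p hp h x) := by
  have hx := x.isLt
  rcases Nat.mod_two_eq_zero_or_one x.val with hx2 | hx2
  · have hxe : x = ⟨2*(x.val/2), by omega⟩ := Fin.ext (by show x.val = 2*(x.val/2); omega)
    rw [hxe, pairInv_even (x.val/2) (by omega),
      rawPerm_odd p hp h (x.val/2) (by omega), rawPerm_even p hp h (x.val/2) (by omega)]
  · have hxe : x = ⟨2*(x.val/2)+1, by omega⟩ := Fin.ext (by show x.val = 2*(x.val/2)+1; omega)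
    rw [hxe, pairInv_odd (x.val/2) (by omega),
      rawPerm_even p hp h (x.val/2) (by omega), rawPerm_odd p hp h (x.val/2) (by omega),
      hp]

lemma rawPerm_congr {p q : Fin (2*n) → Fin (2*n)} (hpq : p = q)
    (hp : Function.Involutive p) (hq : Function.Involutive q)
    (hcp : (pset p).card = n) (hcq : (pset q).card = n) :
    rawPerm p hp hcp = rawPerm q hq hcq := by
  subst hpq; rfl

/-- The canonical pair-perm representative of the coset `gH`. -/
noncomputable def rep (g : Perm (Fin (2*n))) : Perm (Fin (2*n)) :=
  rawPerm (partner g) (partner_involutive g)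
    (pset_card (partner_involutive g) (partner_ne g))

lemma isPairPerm_rep (g : Perm (Fin (2*n))) : isPairPerm (rep g) :=
  isPairPerm_rawPerm _ _

lemma rep_pairInv (g : Perm (Fin (2*n))) (x : Fin (2*n)) :
    rep g (pairInv n x) = partner g (rep g x) :=
  rawPerm_pairInv _ _ x

/-- Membership in the hyperoctahedral group: commutes with `pairInv`. -/
def HComm (h : Perm (Fin (2*n))) : Prop := ∀ x, h (pairInv n x) = pairInv n (h x)

lemma HComm.inv {h : Perm (Fin (2*n))} (hh : HComm h) : HComm h⁻¹ := by
  intro x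
  apply h.injective
  rw [hh (h⁻¹ x)]
  simp

lemma hcomm_rep (g : Perm (Fin (2*n))) : HComm (g⁻¹ * rep g) := by
  intro x
  simp only [Equiv.Perm.mul_apply]
  rw [rep_pairInv]
  simp [partner]

lemma partner_mul {g h : Perm (Fin (2*n))} (hh : HComm h) :
    partner (g * h) = partner g := by
  funext x
  simp only [partner, mul_inv_rev, Equiv.Perm.mul_apply]
  rw [← hh.inv (g⁻¹ x)]
  simp

lemma rep_mul {g h : Perm (Fin (2*n))} (hh : HComm h) : rep (g * h) = rep g :=
  rawPerm_congr (partner_mul hh) _ _ _ _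

lemma rep_pairPerm {σ : Perm (Fin (2*n))} (hσ : isPairPerm σ) : rep σ = σ := by
  have key : ∀ (m : ℕ) (hm : 2*m+1 < 2*n),
      partner σ (σ ⟨2*m, by omega⟩) = σ ⟨2*m+1, hm⟩ := by
    intro m hm
    rw [partner_apply, pairInv_even m hm]
  have chain : ∀ (b a : ℕ) (hb : b < n) (hab : a < b),
      σ ⟨2*a, by omega⟩ < σ ⟨2*b, by omega⟩ := by
    intro b
    induction b with
    | zero => intro a _ h; exact absurd h (Nat.not_lt_zero a)
    | succ m ih =>
      intro a hb hab
      have hstep : σ ⟨2*m, by omega⟩ < σ ⟨2*(m+1), by omega⟩ := by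
        have h2 := hσ.2 m hb
        have heq : (⟨2*m+2, by omega⟩ : Fin (2*n)) = ⟨2*(m+1), by omega⟩ := by
          apply Fin.ext; show 2*m+2 = 2*(m+1); omega
        rwa [heq] at h2
      rcases Nat.lt_succ_iff_lt_or_eq.mp hab with h | h
      · exact lt_trans (ih a (by omega) h) hstep
      · subst h; exact hstep
  have hcard : (pset (partner σ)).card = n :=
    pset_card (partner_involutive σ) (partner_ne σ)
  have hmemf : ∀ k : Fin n,
      σ ⟨2*k.val, by have := k.isLt; omega⟩ ∈ pset (partner σ) := by
    intro k
    rw [mem_pset, key k.val (by have := k.isLt; omega)]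
    exact hσ.1 k.val k.isLt
  have hmono : StrictMono (fun k : Fin n => σ ⟨2*k.val, by have := k.isLt; omega⟩) := by
    intro a b hab
    exact chain b.val a.val b.isLt hab
  have henum := Finset.orderEmbOfFin_unique hcard hmemf hmono
  apply Equiv.ext
  intro x
  have hx := x.isLt
  show rawPerm (partner σ) (partner_involutive σ) hcard x = σ x
  rcases Nat.mod_two_eq_zero_or_one x.val with hx2 | hx2
  · have hxe : x = ⟨2*(x.val/2), by omega⟩ := Fin.ext (by show x.val = 2*(x.val/2); omega)
    rw [hxe, rawPerm_even (partner σ) (partner_involutive σ) hcard (x.val/2) (by omega)]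
    exact (congrFun henum ⟨x.val/2, by omega⟩).symm
  · have hxe : x = ⟨2*(x.val/2)+1, by omega⟩ := Fin.ext (by show x.val = 2*(x.val/2)+1; omega)
    rw [hxe, rawPerm_odd (partner σ) (partner_involutive σ) hcard (x.val/2) (by omega)]
    have h1 : (pset (partner σ)).orderEmbOfFin hcard ⟨x.val/2, by omega⟩ =
        σ ⟨2*(x.val/2), by omega⟩ := (congrFun henum ⟨x.val/2, by omega⟩).symm
    rw [h1, key (x.val/2) (by omega)]

lemma gammaGraph_mul {g h : Perm (Fin (2*n))} (hh : HComm h) :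
    gammaGraph (g * h) = gammaGraph g := by
  have hkey : ∀ a b : Fin (2*n),
      (pairInv n ((g*h)⁻¹ a) = (g*h)⁻¹ b) ↔ (pairInv n (g⁻¹ a) = g⁻¹ b) := by
    intro a b
    rw [mul_inv_rev, Equiv.Perm.mul_apply, Equiv.Perm.mul_apply, ← hh.inv (g⁻¹ a)]
    exact ⟨fun hq => (h⁻¹ : Perm (Fin (2*n))).injective hq, fun hq => by rw [hq]⟩
  ext x y
  show (x ≠ y ∧ (pairInv n x = y ∨ pairInv n ((g*h)⁻¹ x) = (g*h)⁻¹ y)) ↔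
    (x ≠ y ∧ (pairInv n x = y ∨ pairInv n (g⁻¹ x) = g⁻¹ y))
  rw [hkey]

/-- The coset type as a function of the graph alone. -/
noncomputable def ctype2 (G : SimpleGraph (Fin (2*n))) (dr : DecidableRel G.Adj) :
    Multiset ℕ := by
  classical
  exact (@Finset.univ G.ConnectedComponent
      (@SimpleGraph.instFintypeConnectedComponent _ G _ _ dr)).val.map
    (fun c => (Finset.univ.filter fun v => G.connectedComponentMk v = c).card / 2)

lemma ctype2_congr {G G' : SimpleGraph (Fin (2*n))} (h : G = G')
    (dr : DecidableRel G.Adj) (dr' : DecidableRel G'.Adj) :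
    ctype2 G dr = ctype2 G' dr' := by
  subst h
  rw [Subsingleton.elim dr dr']

lemma cosetType_eq (σ : Perm (Fin (2*n))) :
    cosetType σ = ctype2 (gammaGraph σ) inferInstance := rfl

lemma cosetType_mul {g h : Perm (Fin (2*n))} (hh : HComm h) :
    cosetType (g * h) = cosetType g := by
  rw [cosetType_eq, cosetType_eq]
  exact ctype2_congr (gammaGraph_mul hh) _ _

lemma cosetType_rep (g : Perm (Fin (2*n))) : cosetType (rep g) = cosetType g := by
  have hr : rep g = g * (g⁻¹ * rep g) := by group
  rw [hr, cosetType_mul (hcomm_rep g)]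

end Stmt2Aux

open Stmt2Aux

/-- For every n ≥ 1, every τ ∈ S_{2n} and every partition λ of n, the number of pair
partitions σ ∈ M_{2n} with ρ(τ⁻¹σ) = λ equals C(λ): left translation of the transversal
M_{2n} by τ⁻¹ does not change the distribution of coset-types. -/
theorem stmt2 (n : ℕ) (hn : 1 ≤ n) (τ : Perm (Fin (2*n))) (lam : Nat.Partition n) :
    Nat.card {σ : Perm (Fin (2*n)) // isPairPerm σ ∧ cosetType (τ⁻¹ * σ) = lam.parts} =
      CC n lam.parts := by
    classical
  rw [CC]
  apply Nat.card_congr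
  refine ⟨?_, ?_, ?_, ?_⟩
  · rintro ⟨σ, hσ, hct⟩
    refine ⟨rep (τ⁻¹ * σ), isPairPerm_rep _, ?_⟩
    rw [cosetType_rep]; exact hct
  · rintro ⟨σ', hσ', hct⟩
    refine ⟨rep (τ * σ'), isPairPerm_rep _, ?_⟩
    have hdecomp : τ⁻¹ * rep (τ * σ') = σ' * ((τ * σ')⁻¹ * rep (τ * σ')) := by group
    rw [hdecomp, cosetType_mul (hcomm_rep (τ * σ'))]
    exact hct
  · rintro ⟨σ, hσ, hct⟩
    apply Subtype.ext
    show rep (τ * rep (τ⁻¹ * σ)) = σ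
    have hdecomp : τ * rep (τ⁻¹ * σ) = σ * ((τ⁻¹ * σ)⁻¹ * rep (τ⁻¹ * σ)) := by group
    rw [hdecomp, rep_mul (hcomm_rep (τ⁻¹ * σ)), rep_pairPerm hσ]
  · rintro ⟨σ', hσ', hct⟩
    apply Subtype.ext
    show rep (τ⁻¹ * rep (τ * σ')) = σ'
    have hdecomp : τ⁻¹ * rep (τ * σ') = σ' * ((τ * σ')⁻¹ * rep (τ * σ')) := by group
    rw [hdecomp, rep_mul (hcomm_rep (τ * σ')), rep_pairPerm hσ']
end

section
/- Let d, n ≥ 1 and let I = (i_1,…,i_n), I' = (i'_1,…,i'_n), J = (j_1,…,j_n), J' = (j'_1,…,j'_n) be lists with entries in {1,…,d}. Set c = i_1, let P = {p ∈ {1,…,n} : i'_p = c}, and suppose v ∈ {1,…,d} is a value occurring in neither I nor I'. For p ∈ P, let I(p) be the list I with its first entry replaced by v, and let I'(p) be the list I' with its p-th entry replaced by v. Then ∫_{U(d)} ∏_{k=1}^n g_{i_k j_k} ∏_{k=1}^n ḡ_{i'_k j'_k} dg = Σ_{p∈P} ∫_{U(d)} ∏_{k=1}^n g_{I(p)_k,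 j_k} ∏_{k=1}^n ḡ_{I'(p)_k, j'_k} dg. -/
open MeasureTheory Finset

noncomputable instance (d : ℕ) : MeasurableSpace (Matrix.unitaryGroup (Fin d) ℂ) :=
  borel _

instance (d : ℕ) : BorelSpace (Matrix.unitaryGroup (Fin d) ℂ) := ⟨rfl⟩

namespace Stmt12

variable {d : ℕ}

/-- entries of a unitary matrix have norm at most 1 -/
lemma entry_norm_le_one (g : Matrix.unitaryGroup (Fin d) ℂ) (a b : Fin d) :
    ‖(g : Matrix (Fin d) (Fin d) ℂ) a b‖ ≤ 1 := by
  have h : (g : Matrix (Fin d) (Fin d) ℂ) * star (g : Matrix (Fin d) (Fin d) ℂ) = 1 :=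
    (Unitary.mem_iff.mp g.2).2
  have h2 : ∑ j, Complex.normSq ((g : Matrix (Fin d) (Fin d) ℂ) a j) = 1 := by
    have h0 := congrArg (fun M => M a a) h
    simp only [Matrix.mul_apply, Matrix.one_apply_eq, Matrix.star_apply] at h0
    have h1 : ∑ j, (Complex.normSq ((g : Matrix (Fin d) (Fin d) ℂ) a j) : ℂ) = 1 := by
      rw [← h0]
      refine Finset.sum_congr rfl fun j _ => ?_
      rw [RCLike.star_def, Complex.mul_conj]
    exact_mod_cast h1
  have h3 : Complex.normSq ((g : Matrix (Fin d) (Fin d) ℂ) a b) ≤ 1 := by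
    rw [← h2]
    exact Finset.single_le_sum (fun j _ => Complex.normSq_nonneg _) (Finset.mem_univ b)
  have h4 : ‖(g : Matrix (Fin d) (Fin d) ℂ) a b‖ ^ 2 ≤ 1 := by
    rw [Complex.sq_norm]; exact h3
  nlinarith [norm_nonneg ((g : Matrix (Fin d) (Fin d) ℂ) a b)]

/-- the rotation matrix in the (c,v) plane -/
noncomputable def rot (c v : Fin d) (z : ℂ) (t : ℝ) : Matrix (Fin d) (Fin d) ℂ :=
  Matrix.of fun a b =>
    if a = c then (if b = c then (Real.cos t : ℂ) else if b = v then z * Real.sin t else 0)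
    else if a = v then
      (if b = c then -(starRingEnd ℂ z) * Real.sin t else if b = v then (Real.cos t : ℂ) else 0)
    else if a = b then 1 else 0

lemma sum_pair_of_support {c v : Fin d} (hcv : c ≠ v) (f : Fin d → ℂ)
    (h : ∀ j, j ≠ c → j ≠ v → f j = 0) : ∑ j, f j = f c + f v := by
  rw [← Finset.sum_subset (Finset.subset_univ ({c, v} : Finset (Fin d)))
    (fun x _ hx => by
      simp only [Finset.mem_insert, Finset.mem_singleton, not_or] at hx
      exact h x hx.1 hx.2)]
  exact Finset.sum_pair hcv

lemma rot_apply_of_ne {c v : Fin d} (z : ℂ) (t : ℝ) {a : Fin d} (hac : a ≠ c)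
    (hav : a ≠ v) (b : Fin d) : rot c v z t a b = if a = b then 1 else 0 := by
  simp [rot, hac, hav]

lemma rot_cc {c v : Fin d} (z : ℂ) (t : ℝ) : rot c v z t c c = (Real.cos t : ℂ) := by
  simp [rot]
lemma rot_cv {c v : Fin d} (hcv : c ≠ v) (z : ℂ) (t : ℝ) :
    rot c v z t c v = z * Real.sin t := by simp [rot, Ne.symm hcv]
lemma rot_vc {c v : Fin d} (hcv : c ≠ v) (z : ℂ) (t : ℝ) :
    rot c v z t v c = -(starRingEnd ℂ z) * Real.sin t := by simp [rot, hcv, Ne.symm hcv]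
lemma rot_vv {c v : Fin d} (hcv : c ≠ v) (z : ℂ) (t : ℝ) :
    rot c v z t v v = (Real.cos t : ℂ) := by simp [rot, hcv, Ne.symm hcv]
lemma rot_c_other {c v : Fin d} (z : ℂ) (t : ℝ) {b : Fin d} (hbc : b ≠ c) (hbv : b ≠ v) :
    rot c v z t c b = 0 := by simp [rot, hbc, hbv]
lemma rot_v_other {c v : Fin d} (hcv : c ≠ v) (z : ℂ) (t : ℝ) {b : Fin d} (hbc : b ≠ c)
    (hbv : b ≠ v) : rot c v z t v b = 0 := by simp [rot, hcv, hbc, hbv]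

lemma rot_mem {c v : Fin d} (hcv : c ≠ v) {z : ℂ} (hz : z * starRingEnd ℂ z = 1) (t : ℝ) :
    rot c v z t ∈ Matrix.unitaryGroup (Fin d) ℂ := by
  have hsc : (Real.cos t : ℂ) ^ 2 + (Real.sin t : ℂ) ^ 2 = 1 := by
    have := Real.cos_sq_add_sin_sq t
    exact_mod_cast congrArg (Complex.ofReal) this
  rw [Matrix.mem_unitaryGroup_iff]
  ext a b
  rw [Matrix.mul_apply, Matrix.one_apply]
  simp only [Matrix.star_apply, RCLike.star_def]
  by_cases hac : a = c
  · rw [hac]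
    rw [sum_pair_of_support hcv _
      (fun j hjc hjv => by rw [rot_c_other z t hjc hjv, zero_mul])]
    by_cases hbc : b = c
    · rw [hbc, if_pos rfl]
      simp only [rot_cc, rot_cv hcv, map_mul, Complex.conj_ofReal]
      linear_combination hsc + (Real.sin t : ℂ) ^ 2 * hz
    · by_cases hbv : b = v
      · rw [hbv, if_neg (fun h : c = v => hcv h)]
        simp only [rot_cc, rot_cv hcv, rot_vc hcv, rot_vv hcv, map_mul, map_neg,
          Complex.conj_conj, Complex.conj_ofReal]
        ring
      · rw [rot_apply_of_ne z t hbc hbv c, rot_apply_of_ne z t hbc hbv v]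
        simp [hbc, hbv, Ne.symm hbc, Ne.symm hbv]
  · by_cases hav : a = v
    · rw [hav]
      rw [sum_pair_of_support hcv _
        (fun j hjc hjv => by rw [rot_v_other hcv z t hjc hjv, zero_mul])]
      by_cases hbc : b = c
      · rw [hbc, if_neg (fun h : v = c => hcv h.symm)]
        simp only [rot_cc, rot_cv hcv, rot_vc hcv, rot_vv hcv, map_mul, map_neg,
          Complex.conj_conj, Complex.conj_ofReal]
        ring
      · by_cases hbv : b = v
        · rw [hbv, if_pos rfl]
          simp only [rot_vc hcv, rot_vv hcv, map_mul, map_neg, Complex.conj_conj,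
            Complex.conj_ofReal]
          linear_combination hsc + (Real.sin t : ℂ) ^ 2 * hz
        · rw [rot_apply_of_ne z t hbc hbv c, rot_apply_of_ne z t hbc hbv v]
          simp [hbc, hbv, Ne.symm hbc, Ne.symm hbv]
    · rw [Finset.sum_eq_single a]
      · rw [rot_apply_of_ne z t hac hav a, if_pos rfl, one_mul]
        by_cases hbc : b = c
        · rw [hbc, rot_c_other z t hac hav]
          simp [hac]
        · by_cases hbv : b = v
          · rw [hbv, rot_v_other hcv z t hac hav]
            simp [hav]
          · rw [rot_apply_of_ne z t hbc hbv a]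
            by_cases hab : a = b
            · simp [hab]
            · simp [hab, Ne.symm hab]
      · intro j _ hja
        rw [rot_apply_of_ne z t hac hav j, if_neg (Ne.symm hja), zero_mul]
      · intro h; exact absurd (Finset.mem_univ a) h

lemma rot_mul_apply {c v : Fin d} (hcv : c ≠ v) (z : ℂ) (t : ℝ)
    (G : Matrix (Fin d) (Fin d) ℂ) (a j : Fin d) :
    (rot c v z t * G) a j =
      if a = c then Real.cos t * G c j + z * Real.sin t * G v j
      else if a = v then -(starRingEnd ℂ z) * Real.sin t * G c j + Real.cos t * G v j
      else G a j := by
  rw [Matrix.mul_apply]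
  by_cases hac : a = c
  · rw [hac, if_pos rfl]
    rw [sum_pair_of_support hcv _
      (fun b hbc hbv => by rw [rot_c_other z t hbc hbv, zero_mul])]
    rw [rot_cc, rot_cv hcv]
  · rw [if_neg hac]
    by_cases hav : a = v
    · rw [hav, if_pos rfl]
      rw [sum_pair_of_support hcv _
        (fun b hbc hbv => by rw [rot_v_other hcv z t hbc hbv, zero_mul])]
      rw [rot_vc hcv, rot_vv hcv]
    · rw [if_neg hav, Finset.sum_eq_single a]
      · rw [rot_apply_of_ne z t hac hav a, if_pos rfl, one_mul]
      · intro b _ hba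
        rw [rot_apply_of_ne z t hac hav b, if_neg (Ne.symm hba), zero_mul]
      · intro h; exact absurd (Finset.mem_univ a) h

lemma rot_zero_mul {c v : Fin d} (hcv : c ≠ v) (z : ℂ) (G : Matrix (Fin d) (Fin d) ℂ) :
    rot c v z 0 * G = G := by
  ext a j
  rw [rot_mul_apply hcv]
  simp only [Real.cos_zero, Real.sin_zero, Complex.ofReal_one, Complex.ofReal_zero, one_mul,
    mul_zero, zero_mul, add_zero, zero_add, neg_mul, neg_zero, mul_one]
  split_ifs with h1 h2
  · rw [h1]
  · rw [h2]
  · rfl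

/-- derivative (in `t`) of a single entry of `rot * G` -/
noncomputable def rotD (c v : Fin d) (z : ℂ) (t : ℝ) (G : Matrix (Fin d) (Fin d) ℂ)
    (a j : Fin d) : ℂ :=
  if a = c then -(Real.sin t : ℂ) * G c j + z * Real.cos t * G v j
  else if a = v then -(starRingEnd ℂ z) * Real.cos t * G c j + -(Real.sin t : ℂ) * G v j
  else 0

lemma rot_hasDerivAt {c v : Fin d} (hcv : c ≠ v) (z : ℂ)
    (G : Matrix (Fin d) (Fin d) ℂ) (a j : Fin d) (t : ℝ) :
    HasDerivAt (fun s => (rot c v z s * G) a j) (rotD c v z t G a j) t := by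
  have hfun : (fun s => (rot c v z s * G) a j) = fun s =>
      if a = c then (Real.cos s : ℂ) * G c j + z * Real.sin s * G v j
      else if a = v then -(starRingEnd ℂ z) * Real.sin s * G c j + (Real.cos s : ℂ) * G v j
      else G a j := funext fun s => rot_mul_apply hcv z s G a j
  rw [hfun]
  unfold rotD
  have h1 : HasDerivAt (fun s : ℝ => ((Real.cos s : ℂ))) (-(Real.sin t : ℂ)) t := by
    simpa using (Real.hasDerivAt_cos t).ofReal_comp
  have h2 : HasDerivAt (fun s : ℝ => ((Real.sin s : ℂ))) ((Real.cos t : ℂ)) t := by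
    simpa using (Real.hasDerivAt_sin t).ofReal_comp
  by_cases hac : a = c
  · simp only [hac, if_pos rfl]
    exact (h1.mul_const (G c j)).add (((h2.const_mul z)).mul_const (G v j))
  · simp only [hac, if_false]
    by_cases hav : a = v
    · simp only [hav, if_pos rfl]
      exact ((h2.const_mul (-(starRingEnd ℂ z))).mul_const (G c j)).add
        (h1.mul_const (G v j))
    · simp only [hav, if_false]
      exact hasDerivAt_const t (G a j)

lemma rotD_norm_le {c v : Fin d} {z : ℂ} (hz : ‖z‖ = 1) (t : ℝ)
    (G : Matrix (Fin d) (Fin d) ℂ) (hG : ∀ a b, ‖G a b‖ ≤ 1) (a j : Fin d) :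
    ‖rotD c v z t G a j‖ ≤ 2 := by
  have hzc : ‖starRingEnd ℂ z‖ = 1 := by
    rw [starRingEnd_apply, norm_star, hz]
  have hs : ‖(Real.sin t : ℂ)‖ ≤ 1 := by
    rw [Complex.norm_real]; exact Real.abs_sin_le_one t
  have hc : ‖(Real.cos t : ℂ)‖ ≤ 1 := by
    rw [Complex.norm_real]; exact Real.abs_cos_le_one t
  unfold rotD
  split_ifs
  · have e1 : ‖-(Real.sin t : ℂ) * G c j‖ ≤ 1 := by
      rw [norm_mul, norm_neg]
      exact mul_le_one₀ hs (norm_nonneg _) (hG c j)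
    have e2 : ‖z * (Real.cos t : ℂ) * G v j‖ ≤ 1 := by
      rw [norm_mul, norm_mul, hz, one_mul]
      exact mul_le_one₀ hc (norm_nonneg _) (hG v j)
    calc ‖-(Real.sin t : ℂ) * G c j + z * (Real.cos t : ℂ) * G v j‖
        ≤ ‖-(Real.sin t : ℂ) * G c j‖ + ‖z * (Real.cos t : ℂ) * G v j‖ := norm_add_le _ _
      _ ≤ 2 := by linarith
  · have e1 : ‖-(starRingEnd ℂ z) * (Real.cos t : ℂ) * G c j‖ ≤ 1 := by
      rw [norm_mul, norm_mul, norm_neg, hzc, one_mul]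
      exact mul_le_one₀ hc (norm_nonneg _) (hG c j)
    have e2 : ‖-(Real.sin t : ℂ) * G v j‖ ≤ 1 := by
      rw [norm_mul, norm_neg]
      exact mul_le_one₀ hs (norm_nonneg _) (hG v j)
    calc ‖-(starRingEnd ℂ z) * (Real.cos t : ℂ) * G c j + -(Real.sin t : ℂ) * G v j‖
        ≤ ‖-(starRingEnd ℂ z) * (Real.cos t : ℂ) * G c j‖ + ‖-(Real.sin t : ℂ) * G v j‖ :=
          norm_add_le _ _
      _ ≤ 2 := by linarith
  · norm_num

lemma rot_mul_norm_le {c v : Fin d} (hcv : c ≠ v) {z : ℂ} (hz : ‖z‖ = 1) (t : ℝ)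
    (G : Matrix (Fin d) (Fin d) ℂ) (hG : ∀ a b, ‖G a b‖ ≤ 1) (a j : Fin d) :
    ‖(rot c v z t * G) a j‖ ≤ 2 := by
  have hzc : ‖starRingEnd ℂ z‖ = 1 := by
    rw [starRingEnd_apply, norm_star, hz]
  have hs : ‖(Real.sin t : ℂ)‖ ≤ 1 := by
    rw [Complex.norm_real]; exact Real.abs_sin_le_one t
  have hc : ‖(Real.cos t : ℂ)‖ ≤ 1 := by
    rw [Complex.norm_real]; exact Real.abs_cos_le_one t
  rw [rot_mul_apply hcv]
  split_ifs
  · have e1 : ‖(Real.cos t : ℂ) * G c j‖ ≤ 1 := by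
      rw [norm_mul]
      exact mul_le_one₀ hc (norm_nonneg _) (hG c j)
    have e2 : ‖z * (Real.sin t : ℂ) * G v j‖ ≤ 1 := by
      rw [norm_mul, norm_mul, hz, one_mul]
      exact mul_le_one₀ hs (norm_nonneg _) (hG v j)
    calc ‖(Real.cos t : ℂ) * G c j + z * (Real.sin t : ℂ) * G v j‖
        ≤ ‖(Real.cos t : ℂ) * G c j‖ + ‖z * (Real.sin t : ℂ) * G v j‖ := norm_add_le _ _
      _ ≤ 2 := by linarith
  · have e1 : ‖-(starRingEnd ℂ z) * (Real.sin t : ℂ) * G c j‖ ≤ 1 := by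
      rw [norm_mul, norm_mul, norm_neg, hzc, one_mul]
      exact mul_le_one₀ hs (norm_nonneg _) (hG c j)
    have e2 : ‖(Real.cos t : ℂ) * G v j‖ ≤ 1 := by
      rw [norm_mul]
      exact mul_le_one₀ hc (norm_nonneg _) (hG v j)
    calc ‖-(starRingEnd ℂ z) * (Real.sin t : ℂ) * G c j + (Real.cos t : ℂ) * G v j‖
        ≤ ‖-(starRingEnd ℂ z) * (Real.sin t : ℂ) * G c j‖ + ‖(Real.cos t : ℂ) * G v j‖ :=
          norm_add_le _ _
      _ ≤ 2 := by linarith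
  · exact (hG a j).trans (by norm_num)

lemma prod_update_eq {n : ℕ} (f : Fin d → Fin d → ℂ) (A : Fin n → Fin d)
    (Jc : Fin n → Fin d) (k : Fin n) (w : Fin d) :
    ∏ j, f (Function.update A k w j) (Jc j)
      = f w (Jc k) * ∏ j ∈ Finset.univ.erase k, f (A j) (Jc j) := by
  rw [← Finset.mul_prod_erase Finset.univ _ (Finset.mem_univ k), Function.update_self]
  congr 1
  refine Finset.prod_congr rfl fun j hj => ?_
  rw [Function.update_of_ne (Finset.ne_of_mem_erase hj)]

lemma continuous_entry (a b : Fin d) :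
    Continuous fun g : Matrix.unitaryGroup (Fin d) ℂ => (g : Matrix (Fin d) (Fin d) ℂ) a b :=
  Continuous.matrix_elem continuous_subtype_val a b

lemma continuous_rot_entry (c v : Fin d) (z : ℂ) (t : ℝ) (a b : Fin d) :
    Continuous fun g : Matrix.unitaryGroup (Fin d) ℂ =>
      (rot c v z t * (g : Matrix (Fin d) (Fin d) ℂ)) a b :=
  Continuous.matrix_elem (continuous_const.matrix_mul continuous_subtype_val) a b

lemma continuous_rotD_entry (c v : Fin d) (z : ℂ) (t : ℝ) (a b : Fin d) :
    Continuous fun g : Matrix.unitaryGroup (Fin d) ℂ =>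
      rotD c v z t (g : Matrix (Fin d) (Fin d) ℂ) a b := by
  unfold rotD
  split_ifs
  · exact ((continuous_const.mul (continuous_entry c b)).add
      (continuous_const.mul (continuous_entry v b)))
  · exact ((continuous_const.mul (continuous_entry c b)).add
      (continuous_const.mul (continuous_entry v b)))
  · exact continuous_const

lemma continuous_integrand {n : ℕ} (R R' J J' : Fin n → Fin d) :
    Continuous fun g : Matrix.unitaryGroup (Fin d) ℂ =>
      (∏ j, (g : Matrix (Fin d) (Fin d) ℂ) (R j) (J j)) *
        ∏ j, starRingEnd ℂ ((g : Matrix (Fin d) (Fin d) ℂ) (R' j) (J' j)) := by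
  apply Continuous.mul
  · exact continuous_finset_prod _ fun j _ => continuous_entry (R j) (J j)
  · refine continuous_finset_prod _ fun j _ => ?_
    simp only [starRingEnd_apply]
    exact (continuous_entry (R' j) (J' j)).star

lemma norm_integrand_le_one {n : ℕ} (R R' J J' : Fin n → Fin d)
    (g : Matrix.unitaryGroup (Fin d) ℂ) :
    ‖(∏ j, (g : Matrix (Fin d) (Fin d) ℂ) (R j) (J j)) *
        ∏ j, starRingEnd ℂ ((g : Matrix (Fin d) (Fin d) ℂ) (R' j) (J' j))‖ ≤ 1 := by
  rw [norm_mul]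
  have h1 : ‖∏ j, (g : Matrix (Fin d) (Fin d) ℂ) (R j) (J j)‖ ≤ 1 := by
    rw [norm_prod]
    exact Finset.prod_le_one (fun j _ => norm_nonneg _) (fun j _ => entry_norm_le_one g _ _)
  have h2 : ‖∏ j, starRingEnd ℂ ((g : Matrix (Fin d) (Fin d) ℂ) (R' j) (J' j))‖ ≤ 1 := by
    rw [norm_prod]
    refine Finset.prod_le_one (fun j _ => norm_nonneg _) (fun j _ => ?_)
    rw [starRingEnd_apply, norm_star]
    exact entry_norm_le_one g _ _
  exact mul_le_one₀ h1 (norm_nonneg _) h2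

lemma integrable_integrand {n : ℕ} (R R' J J' : Fin n → Fin d)
    (μ : Measure (Matrix.unitaryGroup (Fin d) ℂ)) [IsProbabilityMeasure μ] :
    Integrable (fun g : Matrix.unitaryGroup (Fin d) ℂ =>
      (∏ j, (g : Matrix (Fin d) (Fin d) ℂ) (R j) (J j)) *
        ∏ j, starRingEnd ℂ ((g : Matrix (Fin d) (Fin d) ℂ) (R' j) (J' j))) μ := by
  refine Integrable.mono' (integrable_const 1) ?_ ?_
  · exact (continuous_integrand R R' J J').aestronglyMeasurable
  · exact Filter.Eventually.of_forall fun g => norm_integrand_le_one R R' J J' g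

/-- the integrand, as a function of the row lists -/
noncomputable def W {d n : ℕ} (J J' : Fin n → Fin d) (R R' : Fin n → Fin d)
    (g : Matrix.unitaryGroup (Fin d) ℂ) : ℂ :=
  (∏ j, (g : Matrix (Fin d) (Fin d) ℂ) (R j) (J j)) *
    ∏ j, starRingEnd ℂ ((g : Matrix (Fin d) (Fin d) ℂ) (R' j) (J' j))

/-- the integral of the integrand -/
noncomputable def T {d n : ℕ} (J J' : Fin n → Fin d)
    (μ : Measure (Matrix.unitaryGroup (Fin d) ℂ)) (R R' : Fin n → Fin d) : ℂ :=
  ∫ g, W J J' R R' g ∂μ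

/-- the rotated integrand -/
noncomputable def Ff {d n : ℕ} (c v : Fin d) (z : ℂ) (A B J J' : Fin n → Fin d) (t : ℝ)
    (g : Matrix.unitaryGroup (Fin d) ℂ) : ℂ :=
  (∏ j, (rot c v z t * (g : Matrix (Fin d) (Fin d) ℂ)) (A j) (J j)) *
    ∏ j, starRingEnd ℂ ((rot c v z t * (g : Matrix (Fin d) (Fin d) ℂ)) (B j) (J' j))

/-- its `t`-derivative -/
noncomputable def Ff' {d n : ℕ} (c v : Fin d) (z : ℂ) (A B J J' : Fin n → Fin d) (t : ℝ)
    (g : Matrix.unitaryGroup (Fin d) ℂ) : ℂ :=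
  (∑ k, (∏ j ∈ Finset.univ.erase k,
        (rot c v z t * (g : Matrix (Fin d) (Fin d) ℂ)) (A j) (J j)) *
      rotD c v z t (g : Matrix (Fin d) (Fin d) ℂ) (A k) (J k)) *
      (∏ j, starRingEnd ℂ ((rot c v z t * (g : Matrix (Fin d) (Fin d) ℂ)) (B j) (J' j)))
    + (∏ j, (rot c v z t * (g : Matrix (Fin d) (Fin d) ℂ)) (A j) (J j)) *
      (∑ p, (∏ j ∈ Finset.univ.erase p,
          starRingEnd ℂ ((rot c v z t * (g : Matrix (Fin d) (Fin d) ℂ)) (B j) (J' j))) *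
        starRingEnd ℂ (rotD c v z t (g : Matrix (Fin d) (Fin d) ℂ) (B p) (J' p)))

variable {n : ℕ} {c v : Fin d} {z : ℂ}

lemma Ff_hasDerivAt (hcv : c ≠ v) (z : ℂ) (A B J J' : Fin n → Fin d)
    (g : Matrix.unitaryGroup (Fin d) ℂ) (t : ℝ) :
    HasDerivAt (fun s => Ff c v z A B J J' s g) (Ff' c v z A B J J' t g) t := by
  have hP : HasDerivAt
      (fun s => ∏ j, (rot c v z s * (g : Matrix (Fin d) (Fin d) ℂ)) (A j) (J j))
      (∑ k, (∏ j ∈ Finset.univ.erase k,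
          (rot c v z t * (g : Matrix (Fin d) (Fin d) ℂ)) (A j) (J j)) *
        rotD c v z t (g : Matrix (Fin d) (Fin d) ℂ) (A k) (J k)) t := by
    have := HasDerivAt.finset_prod (u := Finset.univ)
      (f := fun j s => (rot c v z s * (g : Matrix (Fin d) (Fin d) ℂ)) (A j) (J j))
      (f' := fun j => rotD c v z t (g : Matrix (Fin d) (Fin d) ℂ) (A j) (J j))
      (fun j _ => rot_hasDerivAt hcv z _ (A j) (J j) t)
    simpa [smul_eq_mul, Finset.prod_fn] using this
  have hQ : HasDerivAt
      (fun s => ∏ j, starRingEnd ℂ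
        ((rot c v z s * (g : Matrix (Fin d) (Fin d) ℂ)) (B j) (J' j)))
      (∑ p, (∏ j ∈ Finset.univ.erase p, starRingEnd ℂ
          ((rot c v z t * (g : Matrix (Fin d) (Fin d) ℂ)) (B j) (J' j))) *
        starRingEnd ℂ (rotD c v z t (g : Matrix (Fin d) (Fin d) ℂ) (B p) (J' p))) t := by
    have := HasDerivAt.finset_prod (u := Finset.univ)
      (f := fun j s => starRingEnd ℂ
        ((rot c v z s * (g : Matrix (Fin d) (Fin d) ℂ)) (B j) (J' j)))
      (f' := fun j => starRingEnd ℂ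
        (rotD c v z t (g : Matrix (Fin d) (Fin d) ℂ) (B j) (J' j)))
      (fun j _ => by
        simpa only [starRingEnd_apply] using
          (rot_hasDerivAt hcv z _ (B j) (J' j) t).star)
    simpa [smul_eq_mul, Finset.prod_fn] using this
  exact hP.mul hQ

lemma Ff_zero (hcv : c ≠ v) (z : ℂ) (A B J J' : Fin n → Fin d)
    (g : Matrix.unitaryGroup (Fin d) ℂ) :
    Ff c v z A B J J' 0 g = W J J' A B g := by
  unfold Ff W
  rw [rot_zero_mul hcv]

lemma Ff_continuous (z : ℂ) (A B J J' : Fin n → Fin d) (t : ℝ) :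
    Continuous (Ff c v z A B J J' t) := by
  apply Continuous.mul
  · exact continuous_finset_prod _ fun j _ => continuous_rot_entry c v z t (A j) (J j)
  · refine continuous_finset_prod _ fun j _ => ?_
    simp only [starRingEnd_apply]
    exact (continuous_rot_entry c v z t (B j) (J' j)).star

lemma Ff'_continuous (z : ℂ) (A B J J' : Fin n → Fin d) (t : ℝ) :
    Continuous (Ff' c v z A B J J' t) := by
  apply Continuous.add
  · apply Continuous.mul
    · refine continuous_finset_sum _ fun k _ => Continuous.mul ?_ ?_
      · exact continuous_finset_prod _ fun j _ => continuous_rot_entry c v z t (A j) (J j)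
      · exact continuous_rotD_entry c v z t (A k) (J k)
    · refine continuous_finset_prod _ fun j _ => ?_
      simp only [starRingEnd_apply]
      exact (continuous_rot_entry c v z t (B j) (J' j)).star
  · apply Continuous.mul
    · exact continuous_finset_prod _ fun j _ => continuous_rot_entry c v z t (A j) (J j)
    · refine continuous_finset_sum _ fun p _ => Continuous.mul ?_ ?_
      · refine continuous_finset_prod _ fun j _ => ?_
        simp only [starRingEnd_apply]
        exact (continuous_rot_entry c v z t (B j) (J' j)).star
      · simp only [starRingEnd_apply]
        exact (continuous_rotD_entry c v z t (B p) (J' p)).star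

lemma norm_z_eq_one (hz : z * starRingEnd ℂ z = 1) : ‖z‖ = 1 := by
  have h1 : Complex.normSq z = 1 := by
    have h0 := hz
    rw [Complex.mul_conj] at h0
    exact_mod_cast h0
  have h2 : ‖z‖ ^ 2 = 1 := by
    rw [Complex.sq_norm]; exact h1
  nlinarith [norm_nonneg z]

lemma prod_rot_norm_le (hcv : c ≠ v) (hz : ‖z‖ = 1) (t : ℝ)
    (g : Matrix.unitaryGroup (Fin d) ℂ) (R C1 : Fin n → Fin d) (s : Finset (Fin n)) :
    ‖∏ j ∈ s, (rot c v z t * (g : Matrix (Fin d) (Fin d) ℂ)) (R j) (C1 j)‖ ≤ 2 ^ n := by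
  rw [norm_prod]
  calc ∏ j ∈ s, ‖(rot c v z t * (g : Matrix (Fin d) (Fin d) ℂ)) (R j) (C1 j)‖
      ≤ ∏ _j ∈ s, (2 : ℝ) := Finset.prod_le_prod (fun j _ => norm_nonneg _)
        (fun j _ => rot_mul_norm_le hcv hz t _ (entry_norm_le_one g) (R j) (C1 j))
    _ = 2 ^ s.card := by rw [Finset.prod_const]
    _ ≤ 2 ^ n := by
        apply pow_le_pow_right₀ (by norm_num)
        simpa using Finset.card_le_univ s

lemma prod_rot_conj_norm_le (hcv : c ≠ v) (hz : ‖z‖ = 1) (t : ℝ)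
    (g : Matrix.unitaryGroup (Fin d) ℂ) (R C1 : Fin n → Fin d) (s : Finset (Fin n)) :
    ‖∏ j ∈ s, starRingEnd ℂ
      ((rot c v z t * (g : Matrix (Fin d) (Fin d) ℂ)) (R j) (C1 j))‖ ≤ 2 ^ n := by
  have h := prod_rot_norm_le hcv hz t g R C1 s
  rw [norm_prod] at h ⊢
  have heq : ∀ j, ‖starRingEnd ℂ ((rot c v z t * (g : Matrix (Fin d) (Fin d) ℂ)) (R j) (C1 j))‖
      = ‖(rot c v z t * (g : Matrix (Fin d) (Fin d) ℂ)) (R j) (C1 j)‖ := fun j => by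
    rw [starRingEnd_apply, norm_star]
  calc ∏ j ∈ s, ‖starRingEnd ℂ ((rot c v z t * (g : Matrix (Fin d) (Fin d) ℂ)) (R j) (C1 j))‖
      = ∏ j ∈ s, ‖(rot c v z t * (g : Matrix (Fin d) (Fin d) ℂ)) (R j) (C1 j)‖ :=
        Finset.prod_congr rfl fun j _ => heq j
    _ ≤ 2 ^ n := h

lemma Ff'_norm_le (hcv : c ≠ v) (hz : ‖z‖ = 1) (A B J J' : Fin n → Fin d) (t : ℝ)
    (g : Matrix.unitaryGroup (Fin d) ℂ) :
    ‖Ff' c v z A B J J' t g‖ ≤ (n : ℝ) * 2 ^ (2 * n + 2) := by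
  have hGb := entry_norm_le_one g
  have hP : ‖∏ j, (rot c v z t * (g : Matrix (Fin d) (Fin d) ℂ)) (A j) (J j)‖ ≤ 2 ^ n :=
    prod_rot_norm_le hcv hz t g A J _
  have hQ : ‖∏ j, starRingEnd ℂ
      ((rot c v z t * (g : Matrix (Fin d) (Fin d) ℂ)) (B j) (J' j))‖ ≤ 2 ^ n :=
    prod_rot_conj_norm_le hcv hz t g B J' _
  have hS1 : ‖∑ k, (∏ j ∈ Finset.univ.erase k,
        (rot c v z t * (g : Matrix (Fin d) (Fin d) ℂ)) (A j) (J j)) *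
      rotD c v z t (g : Matrix (Fin d) (Fin d) ℂ) (A k) (J k)‖ ≤ (n : ℝ) * (2 ^ n * 2) := by
    calc ‖∑ k, (∏ j ∈ Finset.univ.erase k,
          (rot c v z t * (g : Matrix (Fin d) (Fin d) ℂ)) (A j) (J j)) *
        rotD c v z t (g : Matrix (Fin d) (Fin d) ℂ) (A k) (J k)‖
        ≤ ∑ k : Fin n, ‖(∏ j ∈ Finset.univ.erase k,
            (rot c v z t * (g : Matrix (Fin d) (Fin d) ℂ)) (A j) (J j)) *
          rotD c v z t (g : Matrix (Fin d) (Fin d) ℂ) (A k) (J k)‖ := norm_sum_le _ _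
      _ ≤ ∑ _k : Fin n, ((2 : ℝ) ^ n * 2) := by
          refine Finset.sum_le_sum fun k _ => ?_
          rw [norm_mul]
          exact mul_le_mul (prod_rot_norm_le hcv hz t g A J _)
            (rotD_norm_le hz t _ hGb (A k) (J k)) (norm_nonneg _) (by positivity)
      _ = (n : ℝ) * (2 ^ n * 2) := by
          rw [Finset.sum_const, Finset.card_univ, Fintype.card_fin, nsmul_eq_mul]
  have hS2 : ‖∑ p, (∏ j ∈ Finset.univ.erase p, starRingEnd ℂ
        ((rot c v z t * (g : Matrix (Fin d) (Fin d) ℂ)) (B j) (J' j))) *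
      starRingEnd ℂ (rotD c v z t (g : Matrix (Fin d) (Fin d) ℂ) (B p) (J' p))‖
      ≤ (n : ℝ) * (2 ^ n * 2) := by
    calc ‖∑ p, (∏ j ∈ Finset.univ.erase p, starRingEnd ℂ
          ((rot c v z t * (g : Matrix (Fin d) (Fin d) ℂ)) (B j) (J' j))) *
        starRingEnd ℂ (rotD c v z t (g : Matrix (Fin d) (Fin d) ℂ) (B p) (J' p))‖
        ≤ ∑ p : Fin n, ‖(∏ j ∈ Finset.univ.erase p, starRingEnd ℂ
            ((rot c v z t * (g : Matrix (Fin d) (Fin d) ℂ)) (B j) (J' j))) *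
          starRingEnd ℂ (rotD c v z t (g : Matrix (Fin d) (Fin d) ℂ) (B p) (J' p))‖ :=
          norm_sum_le _ _
      _ ≤ ∑ _p : Fin n, ((2 : ℝ) ^ n * 2) := by
          refine Finset.sum_le_sum fun p _ => ?_
          rw [norm_mul, starRingEnd_apply, norm_star]
          exact mul_le_mul (prod_rot_conj_norm_le hcv hz t g B J' _)
            (rotD_norm_le hz t _ hGb (B p) (J' p)) (norm_nonneg _) (by positivity)
      _ = (n : ℝ) * (2 ^ n * 2) := by
          rw [Finset.sum_const, Finset.card_univ, Fintype.card_fin, nsmul_eq_mul]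
  have hpow : (2 : ℝ) ^ (2 * n + 2) = 2 ^ n * 2 ^ n * 4 := by
    rw [two_mul, pow_add, pow_add]; norm_num
  have hnn : (0 : ℝ) ≤ (n : ℝ) := Nat.cast_nonneg n
  have h2n : (0 : ℝ) < 2 ^ n := by positivity
  calc ‖Ff' c v z A B J J' t g‖
      ≤ ‖(∑ k, (∏ j ∈ Finset.univ.erase k,
            (rot c v z t * (g : Matrix (Fin d) (Fin d) ℂ)) (A j) (J j)) *
          rotD c v z t (g : Matrix (Fin d) (Fin d) ℂ) (A k) (J k))‖ *
        ‖(∏ j, starRingEnd ℂ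
            ((rot c v z t * (g : Matrix (Fin d) (Fin d) ℂ)) (B j) (J' j)))‖
        + ‖(∏ j, (rot c v z t * (g : Matrix (Fin d) (Fin d) ℂ)) (A j) (J j))‖ *
          ‖(∑ p, (∏ j ∈ Finset.univ.erase p, starRingEnd ℂ
              ((rot c v z t * (g : Matrix (Fin d) (Fin d) ℂ)) (B j) (J' j))) *
            starRingEnd ℂ (rotD c v z t (g : Matrix (Fin d) (Fin d) ℂ) (B p) (J' p)))‖ := by
        unfold Ff'
        exact (norm_add_le _ _).trans (by rw [norm_mul, norm_mul])
    _ ≤ (n : ℝ) * 2 ^ (2 * n + 2) := by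
        rw [hpow]
        nlinarith [hS1, hS2, hP, hQ, norm_nonneg (∑ k, (∏ j ∈ Finset.univ.erase k,
            (rot c v z t * (g : Matrix (Fin d) (Fin d) ℂ)) (A j) (J j)) *
          rotD c v z t (g : Matrix (Fin d) (Fin d) ℂ) (A k) (J k)),
          norm_nonneg (∏ j, (rot c v z t * (g : Matrix (Fin d) (Fin d) ℂ)) (A j) (J j)),
          norm_nonneg (∏ j, starRingEnd ℂ
            ((rot c v z t * (g : Matrix (Fin d) (Fin d) ℂ)) (B j) (J' j))),
          norm_nonneg (∑ p, (∏ j ∈ Finset.univ.erase p, starRingEnd ℂ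
              ((rot c v z t * (g : Matrix (Fin d) (Fin d) ℂ)) (B j) (J' j))) *
            starRingEnd ℂ (rotD c v z t (g : Matrix (Fin d) (Fin d) ℂ) (B p) (J' p)))]

lemma key {d n : ℕ} {c v : Fin d} (hcv : c ≠ v) (A B J J' : Fin n → Fin d)
    (μ : Measure (Matrix.unitaryGroup (Fin d) ℂ)) [μ.IsHaarMeasure] [IsProbabilityMeasure μ]
    {z : ℂ} (hz : z * starRingEnd ℂ z = 1) :
    z * (∑ k ∈ Finset.univ.filter (fun k => A k = c),
          T J J' μ (Function.update A k v) B)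
      - starRingEnd ℂ z * (∑ k ∈ Finset.univ.filter (fun k => A k = v),
          T J J' μ (Function.update A k c) B)
      + starRingEnd ℂ z * (∑ p ∈ Finset.univ.filter (fun p => B p = c),
          T J J' μ A (Function.update B p v))
      - z * (∑ p ∈ Finset.univ.filter (fun p => B p = v),
          T J J' μ A (Function.update B p c)) = 0 := by
  have hz1 : ‖z‖ = 1 := norm_z_eq_one hz
  -- the integral is constant in `t` by Haar invariance
  have hconst : ∀ t : ℝ, ∫ g, Ff c v z A B J J' t g ∂μ = ∫ g, Ff c v z A B J J' 0 g ∂μ := by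
    intro t
    have hmem := rot_mem hcv hz t
    have heq : ∀ g : Matrix.unitaryGroup (Fin d) ℂ,
        Ff c v z A B J J' t g =
          Ff c v z A B J J' 0
            ((⟨rot c v z t, hmem⟩ : Matrix.unitaryGroup (Fin d) ℂ) * g) := by
      intro g
      have hcoe : (((⟨rot c v z t, hmem⟩ : Matrix.unitaryGroup (Fin d) ℂ) * g :
          Matrix.unitaryGroup (Fin d) ℂ) : Matrix (Fin d) (Fin d) ℂ)
          = rot c v z t * (g : Matrix (Fin d) (Fin d) ℂ) := rfl
      unfold Ff
      rw [hcoe, rot_zero_mul hcv]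
    calc (∫ g, Ff c v z A B J J' t g ∂μ)
        = ∫ g, Ff c v z A B J J' 0
            ((⟨rot c v z t, hmem⟩ : Matrix.unitaryGroup (Fin d) ℂ) * g) ∂μ :=
          integral_congr_ae (Filter.Eventually.of_forall heq)
      _ = ∫ g, Ff c v z A B J J' 0 g ∂μ := integral_mul_left_eq_self _ _
  -- differentiate under the integral sign at t = 0
  have hder := hasDerivAt_integral_of_dominated_loc_of_deriv_le (μ := μ)
      (F := fun t g => Ff c v z A B J J' t g) (F' := fun t g => Ff' c v z A B J J' t g)
      (x₀ := (0 : ℝ)) (bound := fun _ => (n : ℝ) * 2 ^ (2 * n + 2)) (s := Metric.ball 0 1) (Metric.ball_mem_nhds _ one_pos)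
      (Filter.Eventually.of_forall fun t =>
        (Ff_continuous z A B J J' t).aestronglyMeasurable)
      (by
        refine Integrable.mono' (integrable_const 1)
          (Ff_continuous z A B J J' 0).aestronglyMeasurable ?_
        refine Filter.Eventually.of_forall fun g => ?_
        refine le_trans (le_of_eq ?_) (norm_integrand_le_one A B J J' g)
        exact congrArg Norm.norm (Ff_zero hcv z A B J J' g))
      (Ff'_continuous z A B J J' 0).aestronglyMeasurable
      (Filter.Eventually.of_forall fun g t _ => Ff'_norm_le hcv hz1 A B J J' t g)
      (integrable_const _)
      (Filter.Eventually.of_forall fun g t _ => Ff_hasDerivAt hcv z A B J J' g t)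
  obtain ⟨-, hD⟩ := hder
  have hDconst : HasDerivAt (fun t : ℝ => ∫ g, Ff c v z A B J J' t g ∂μ) 0 0 := by
    have hfun : (fun t : ℝ => ∫ g, Ff c v z A B J J' t g ∂μ)
        = fun _ => ∫ g, Ff c v z A B J J' 0 g ∂μ := funext hconst
    rw [hfun]; exact hasDerivAt_const _ _
  have hzero : ∫ g, Ff' c v z A B J J' 0 g ∂μ = 0 := hD.unique hDconst
  -- rewrite the integrand of the derivative at 0
  have hpoint : ∀ g : Matrix.unitaryGroup (Fin d) ℂ, Ff' c v z A B J J' 0 g =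
      z * (∑ k ∈ Finset.univ.filter (fun k => A k = c),
            W J J' (Function.update A k v) B g)
      - starRingEnd ℂ z * (∑ k ∈ Finset.univ.filter (fun k => A k = v),
            W J J' (Function.update A k c) B g)
      + starRingEnd ℂ z * (∑ p ∈ Finset.univ.filter (fun p => B p = c),
            W J J' A (Function.update B p v) g)
      - z * (∑ p ∈ Finset.univ.filter (fun p => B p = v),
            W J J' A (Function.update B p c) g) := by
    intro g
    set G : Matrix (Fin d) (Fin d) ℂ := (g : Matrix (Fin d) (Fin d) ℂ) with hGdef
    have hD0 : ∀ a j, rotD c v z 0 G a j =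
        if a = c then z * G v j else if a = v then -(starRingEnd ℂ z) * G c j else 0 := by
      intro a j
      unfold rotD
      simp
    have hterm : ∀ k : Fin n,
        (∏ j ∈ Finset.univ.erase k, G (A j) (J j)) * rotD c v z 0 G (A k) (J k)
        = (if A k = c then z * ∏ j, G (Function.update A k v j) (J j) else 0)
          + (if A k = v then
              -(starRingEnd ℂ z) * ∏ j, G (Function.update A k c j) (J j) else 0) := by
      intro k
      by_cases hc1 : A k = c
      · rw [if_pos hc1, if_neg (fun h : A k = v => hcv (hc1.symm.trans h)), hD0,
          if_pos hc1, prod_update_eq (f := G), add_zero]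
        ring
      · by_cases hv1 : A k = v
        · rw [if_neg hc1, if_pos hv1, hD0, if_neg hc1, if_pos hv1, prod_update_eq (f := G),
            zero_add]
          ring
        · rw [if_neg hc1, if_neg hv1, hD0, if_neg hc1, if_neg hv1, mul_zero, add_zero]
    have hterm' : ∀ p : Fin n,
        (∏ j ∈ Finset.univ.erase p, starRingEnd ℂ (G (B j) (J' j))) *
          starRingEnd ℂ (rotD c v z 0 G (B p) (J' p))
        = (if B p = c then starRingEnd ℂ z *
              ∏ j, starRingEnd ℂ (G (Function.update B p v j) (J' j)) else 0)
          + (if B p = v then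
              -z * ∏ j, starRingEnd ℂ (G (Function.update B p c j) (J' j)) else 0) := by
      intro p
      by_cases hc1 : B p = c
      · rw [if_pos hc1, if_neg (fun h : B p = v => hcv (hc1.symm.trans h)), hD0,
          if_pos hc1, map_mul, prod_update_eq (fun a b => starRingEnd ℂ (G a b)), add_zero]
        ring
      · by_cases hv1 : B p = v
        · rw [if_neg hc1, if_pos hv1, hD0, if_neg hc1, if_pos hv1, map_mul, map_neg,
            Complex.conj_conj, prod_update_eq (fun a b => starRingEnd ℂ (G a b)), zero_add]
          ring
        · rw [if_neg hc1, if_neg hv1, hD0, if_neg hc1, if_neg hv1, map_zero, mul_zero,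
            add_zero]
    have hS1 : (∑ k, (∏ j ∈ Finset.univ.erase k, G (A j) (J j)) *
          rotD c v z 0 G (A k) (J k))
        = z * (∑ k ∈ Finset.univ.filter (fun k => A k = c),
              ∏ j, G (Function.update A k v j) (J j))
          - starRingEnd ℂ z * (∑ k ∈ Finset.univ.filter (fun k => A k = v),
              ∏ j, G (Function.update A k c j) (J j)) := by
      simp only [hterm]
      rw [Finset.sum_add_distrib, ← Finset.sum_filter, ← Finset.sum_filter,
        ← Finset.mul_sum, ← Finset.mul_sum]
      ring
    have hS2 : (∑ p, (∏ j ∈ Finset.univ.erase p, starRingEnd ℂ (G (B j) (J' j))) *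
          starRingEnd ℂ (rotD c v z 0 G (B p) (J' p)))
        = starRingEnd ℂ z * (∑ p ∈ Finset.univ.filter (fun p => B p = c),
              ∏ j, starRingEnd ℂ (G (Function.update B p v j) (J' j)))
          - z * (∑ p ∈ Finset.univ.filter (fun p => B p = v),
              ∏ j, starRingEnd ℂ (G (Function.update B p c j) (J' j))) := by
      simp only [hterm']
      rw [Finset.sum_add_distrib, ← Finset.sum_filter, ← Finset.sum_filter,
        ← Finset.mul_sum, ← Finset.mul_sum]
      ring
    unfold Ff' W
    rw [rot_zero_mul hcv, ← hGdef, hS1, hS2]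
    calc (z * (∑ k ∈ Finset.univ.filter (fun k => A k = c),
            ∏ j, G (Function.update A k v j) (J j))
          - starRingEnd ℂ z * (∑ k ∈ Finset.univ.filter (fun k => A k = v),
            ∏ j, G (Function.update A k c j) (J j))) *
          (∏ j, starRingEnd ℂ (G (B j) (J' j)))
        + (∏ j, G (A j) (J j)) *
          (starRingEnd ℂ z * (∑ p ∈ Finset.univ.filter (fun p => B p = c),
            ∏ j, starRingEnd ℂ (G (Function.update B p v j) (J' j)))
          - z * (∑ p ∈ Finset.univ.filter (fun p => B p = v),
            ∏ j, starRingEnd ℂ (G (Function.update B p c j) (J' j))))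
        = z * ((∑ k ∈ Finset.univ.filter (fun k => A k = c),
            ∏ j, G (Function.update A k v j) (J j)) *
            (∏ j, starRingEnd ℂ (G (B j) (J' j))))
          - starRingEnd ℂ z * ((∑ k ∈ Finset.univ.filter (fun k => A k = v),
            ∏ j, G (Function.update A k c j) (J j)) *
            (∏ j, starRingEnd ℂ (G (B j) (J' j))))
          + starRingEnd ℂ z * ((∏ j, G (A j) (J j)) *
            (∑ p ∈ Finset.univ.filter (fun p => B p = c),
              ∏ j, starRingEnd ℂ (G (Function.update B p v j) (J' j))))
          - z * ((∏ j, G (A j) (J j)) *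
            (∑ p ∈ Finset.univ.filter (fun p => B p = v),
              ∏ j, starRingEnd ℂ (G (Function.update B p c j) (J' j)))) := by ring
      _ = _ := by
          simp only [Finset.mul_sum, Finset.sum_mul, mul_assoc]
  -- integrate the pointwise identity
  have hWint : ∀ R R' : Fin n → Fin d, Integrable (W J J' R R') μ := by
    intro R R'
    unfold W
    exact integrable_integrand R R' J J' μ
  have hint1 : Integrable (fun g => ∑ k ∈ Finset.univ.filter (fun k => A k = c),
      W J J' (Function.update A k v) B g) μ :=
    integrable_finset_sum _ fun k _ => hWint _ _
  have hint2 : Integrable (fun g => ∑ k ∈ Finset.univ.filter (fun k => A k = v),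
      W J J' (Function.update A k c) B g) μ :=
    integrable_finset_sum _ fun k _ => hWint _ _
  have hint3 : Integrable (fun g => ∑ p ∈ Finset.univ.filter (fun p => B p = c),
      W J J' A (Function.update B p v) g) μ :=
    integrable_finset_sum _ fun p _ => hWint _ _
  have hint4 : Integrable (fun g => ∑ p ∈ Finset.univ.filter (fun p => B p = v),
      W J J' A (Function.update B p c) g) μ :=
    integrable_finset_sum _ fun p _ => hWint _ _
  have i1 : Integrable (fun g => z * ∑ k ∈ Finset.univ.filter (fun k => A k = c),
      W J J' (Function.update A k v) B g) μ := hint1.const_mul z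
  have i2 : Integrable (fun g => starRingEnd ℂ z * ∑ k ∈ Finset.univ.filter (fun k => A k = v),
      W J J' (Function.update A k c) B g) μ := hint2.const_mul (starRingEnd ℂ z)
  have i3 : Integrable (fun g => starRingEnd ℂ z * ∑ p ∈ Finset.univ.filter (fun p => B p = c),
      W J J' A (Function.update B p v) g) μ := hint3.const_mul (starRingEnd ℂ z)
  have i4 : Integrable (fun g => z * ∑ p ∈ Finset.univ.filter (fun p => B p = v),
      W J J' A (Function.update B p c) g) μ := hint4.const_mul z
  have i12 : Integrable (fun g =>
      z * ∑ k ∈ Finset.univ.filter (fun k => A k = c), W J J' (Function.update A k v) B g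
      - starRingEnd ℂ z * ∑ k ∈ Finset.univ.filter (fun k => A k = v),
          W J J' (Function.update A k c) B g) μ := i1.sub i2
  have i123 : Integrable (fun g =>
      z * ∑ k ∈ Finset.univ.filter (fun k => A k = c), W J J' (Function.update A k v) B g
      - starRingEnd ℂ z * ∑ k ∈ Finset.univ.filter (fun k => A k = v),
          W J J' (Function.update A k c) B g
      + starRingEnd ℂ z * ∑ p ∈ Finset.univ.filter (fun p => B p = c),
          W J J' A (Function.update B p v) g) μ := i12.add i3
  have hcalc : ∫ g, Ff' c v z A B J J' 0 g ∂μ =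
      z * (∑ k ∈ Finset.univ.filter (fun k => A k = c),
          T J J' μ (Function.update A k v) B)
      - starRingEnd ℂ z * (∑ k ∈ Finset.univ.filter (fun k => A k = v),
          T J J' μ (Function.update A k c) B)
      + starRingEnd ℂ z * (∑ p ∈ Finset.univ.filter (fun p => B p = c),
          T J J' μ A (Function.update B p v))
      - z * (∑ p ∈ Finset.univ.filter (fun p => B p = v),
          T J J' μ A (Function.update B p c)) := by
    rw [integral_congr_ae (Filter.Eventually.of_forall hpoint)]
    rw [integral_sub i123 i4, integral_add i12 i3,
      integral_sub i1 i2, integral_const_mul, integral_const_mul, integral_const_mul,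
      integral_const_mul, integral_finset_sum _ (fun k _ => hWint _ _),
      integral_finset_sum _ (fun k _ => hWint _ _),
      integral_finset_sum _ (fun p _ => hWint _ _),
      integral_finset_sum _ (fun p _ => hWint _ _)]
    rfl
  exact hcalc.symm.trans hzero

end Stmt12


open Stmt12 in
open Classical in
/-- One step of the list-reduction algorithm for the unitary group: with c = i₁,
P = {p : i'_p = c}, and v a value occurring in neither I nor I', replacing (for each
p ∈ P) the first entry of I and the p-th entry of I' by v,
∫ ∏ g_{i_k j_k} ∏ ḡ_{i'_k j'_k} = Σ_{p∈P} ∫ ∏ g_{I(p)_k j_k} ∏ ḡ_{I'(p)_k j'_k}. -/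
theorem stmt12 (d n : ℕ) (hd : 0 < d) (hn : 0 < n)
    (I I' J J' : Fin n → Fin d) (v : Fin d)
    (hv : ∀ k, I k ≠ v ∧ I' k ≠ v)
    (μ : Measure (Matrix.unitaryGroup (Fin d) ℂ)) [μ.IsHaarMeasure]
    [IsProbabilityMeasure μ] :
    ∫ g, (∏ k, (g : Matrix (Fin d) (Fin d) ℂ) (I k) (J k)) *
        ∏ k, starRingEnd ℂ ((g : Matrix (Fin d) (Fin d) ℂ) (I' k) (J' k)) ∂μ =
      ∑ p ∈ Finset.univ.filter (fun p => I' p = I ⟨0, hn⟩),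
        ∫ g, (∏ k, (g : Matrix (Fin d) (Fin d) ℂ)
                (Function.update I ⟨0, hn⟩ v k) (J k)) *
          ∏ k, starRingEnd ℂ ((g : Matrix (Fin d) (Fin d) ℂ)
                (Function.update I' p v k) (J' k)) ∂μ := by
  have hcv : I ⟨0, hn⟩ ≠ v := (hv ⟨0, hn⟩).1
  have h1 := key (c := I ⟨0, hn⟩) (v := v) hcv (Function.update I ⟨0, hn⟩ v) I' J J' μ
    (z := (1 : ℂ)) (by simp)
  have h2 := key (c := I ⟨0, hn⟩) (v := v) hcv (Function.update I ⟨0, hn⟩ v) I' J J' μ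
    (z := Complex.I) (by rw [Complex.conj_I]; simp [Complex.I_mul_I])
  have hAv : Finset.univ.filter (fun k => Function.update I ⟨0, hn⟩ v k = v)
      = {(⟨0, hn⟩ : Fin n)} := by
    ext k
    simp only [Finset.mem_filter, Finset.mem_univ, true_and, Finset.mem_singleton]
    constructor
    · intro h
      by_contra hk
      rw [Function.update_of_ne hk] at h
      exact (hv k).1 h
    · intro h
      rw [h, Function.update_self]
  have hBv : Finset.univ.filter (fun p => I' p = v) = (∅ : Finset (Fin n)) := by
    ext p
    simp only [Finset.mem_filter, Finset.mem_univ, true_and, Finset.notMem_empty,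
      iff_false]
    exact (hv p).2
  have hupd : Function.update (Function.update I ⟨0, hn⟩ v) ⟨0, hn⟩ (I ⟨0, hn⟩) = I := by
    rw [Function.update_idem]
    exact Function.update_eq_self _ _
  rw [hAv, hBv, Finset.sum_singleton, Finset.sum_empty, hupd, map_one] at h1
  rw [hAv, hBv, Finset.sum_singleton, Finset.sum_empty, hupd, Complex.conj_I] at h2
  have hgoal : T J J' μ I I' =
      ∑ p ∈ Finset.univ.filter (fun p => I' p = I ⟨0, hn⟩),
        T J J' μ (Function.update I ⟨0, hn⟩ v) (Function.update I' p v) := by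
    linear_combination (-(1 : ℂ)/2) * h1 - Complex.I/2 * h2
      + (T J J' μ I I'/2
        + (∑ k ∈ Finset.univ.filter
            (fun k => Function.update I ⟨0, hn⟩ v k = I ⟨0, hn⟩),
            T J J' μ (Function.update (Function.update I ⟨0, hn⟩ v) k v) I')/2
        - (∑ p ∈ Finset.univ.filter (fun p => I' p = I ⟨0, hn⟩),
            T J J' μ (Function.update I ⟨0, hn⟩ v) (Function.update I' p v))/2)
          * Complex.I_sq
  exact hgoal
end
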